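/- Let O be an open subset of Mat(2,ℂ) contained in {U : U₁₀ ≠ 0}, and let f₊ be a holomorphic (ℂ-differentiable) function on O such that for every U ∈ O with det U = 1 one has (∂₊₊ f₊)(U) = 0 and (∂₀ f₊)(U) = f₊(U). Then locally on SL(2,ℂ) the function f₊ has the form f₊ = u₊^α f_α(u₊¹/u₊²): for every U⁰ ∈ O with det U⁰ = 1 there exist an open neighborhood V ⊆ O of U⁰ and holomorphic functions f₁, f₂ defined on an open subset of ℂ containing U⁰₀₀/U⁰₁₀ such that f₊(U) = U₀₀ · f₁(U₀₀/U₁₀) + U₁₀ · f₂(U₀₀/U₁₀) for all U ∈ V with det U = 1. -/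

import Mathlib

open Metric

/-- The determinant of a 2×2 complex matrix, viewed as an element of `Fin 2 → Fin 2 → ℂ`. -/
def det2 (U : Fin 2 → Fin 2 → ℂ) : ℂ := U 0 0 * U 1 1 - U 0 1 * U 1 0

/-- The direction `U·E` with `E = [[0,1],[0,0]]`, defining the fundamental vector
field `∂₊₊` of the right `SL(2,ℂ)`-action: `(U·E)_{i0} = 0`, `(U·E)_{i1} = U_{i0}`. -/
def dirE (U : Fin 2 → Fin 2 → ℂ) : Fin 2 → Fin 2 → ℂ :=
  fun i j => if j = 1 then U i 0 else 0

/-- The direction `U·H` with `H = [[1,0],[0,−1]]`, defining the fundamental vector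
field `∂₀` of the right `SL(2,ℂ)`-action: `(U·H)_{i0} = U_{i0}`, `(U·H)_{i1} = −U_{i1}`. -/
def dirH (U : Fin 2 → Fin 2 → ℂ) : Fin 2 → Fin 2 → ℂ :=
  fun i j => if j = 0 then U i 0 else -(U i 1)

/-- A one-variable function with vanishing complex derivative on a convex set is constant. -/
lemma const_on_convex {u : ℂ → ℂ} {s : Set ℂ} (hs : Convex ℝ s) (h : ∀ x ∈ s, HasDerivAt u 0 x)
    {x y : ℂ} (hx : x ∈ s) (hy : y ∈ s) : u x = u y := by
  have H : ∀ x ∈ s, HasFDerivWithinAt u (0 : ℂ →L[ℂ] ℂ) s x := fun x hxs => by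
    have := (h x hxs).hasFDerivAt.hasFDerivWithinAt (s := s)
    simpa using this
  have := hs.norm_image_sub_le_of_norm_hasFDerivWithin_le (f' := fun _ => 0) (C := 0) H
    (fun x hxs => by simp) hx hy
  simp only [zero_mul] at this
  have h0 : ‖u y - u x‖ ≤ 0 := this
  rw [← sub_eq_zero]
  simpa [eq_comm, sub_eq_zero] using norm_le_zero_iff.mp h0

/-- Local parametrization of `SL(2,ℂ)` near a matrix with second column direction `k = c₀d₀`. -/
noncomputable def phiP (k z s t : ℂ) : Fin 2 → Fin 2 → ℂ :=
  ![![s*z, (z*k-1)/s + t*(s*z)], ![s, k/s + t*s]]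

lemma phiP_det (k z s t : ℂ) (hs : s ≠ 0) : det2 (phiP k z s t) = 1 := by
  show s*z * (k/s + t*s) - ((z*k-1)/s + t*(s*z)) * s = 1
  field_simp
  ring

lemma phiP_t (k z s t : ℂ) :
    phiP k z s t = phiP k z s 0 + t • ![![(0:ℂ), s*z], ![0, s]] := by
  funext i j
  fin_cases i <;> fin_cases j <;>
    simp [phiP, Pi.smul_apply, smul_eq_mul] <;> ring

lemma dirE_phiP (k z s t : ℂ) :
    dirE (phiP k z s t) = ![![(0:ℂ), s*z], ![0, s]] := by
  funext i j
  fin_cases i <;> fin_cases j <;> simp [phiP, dirE]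

lemma phiP_s (k z s : ℂ) :
    phiP k z s 0 = s • ![![z, (0:ℂ)], ![1, 0]] + s⁻¹ • ![![(0:ℂ), z*k-1], ![0, k]] := by
  funext i j
  fin_cases i <;> fin_cases j <;>
    simp [phiP, Pi.smul_apply, smul_eq_mul, div_eq_inv_mul] <;> ring

lemma dirH_phiP (k z s : ℂ) (hs : s ≠ 0) :
    ![![z, (0:ℂ)], ![1, 0]] + (-(s^2)⁻¹) • ![![(0:ℂ), z*k-1], ![0, k]]
      = s⁻¹ • dirH (phiP k z s 0) := by
  funext i j
  fin_cases i <;> fin_cases j <;>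
    simp [phiP, dirH, Pi.smul_apply, smul_eq_mul, div_eq_mul_inv, sq, mul_inv] <;> field_simp

theorem local_charge_one_analytic_form
    (O : Set (Fin 2 → Fin 2 → ℂ)) (hO : IsOpen O)
    (hO' : O ⊆ {U : Fin 2 → Fin 2 → ℂ | U 1 0 ≠ 0})
    (f : (Fin 2 → Fin 2 → ℂ) → ℂ) (hf : DifferentiableOn ℂ f O)
    (hE : ∀ U ∈ O, det2 U = 1 → fderiv ℂ f U (dirE U) = 0)
    (hH : ∀ U ∈ O, det2 U = 1 → fderiv ℂ f U (dirH U) = f U) :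
    ∀ U₀ ∈ O, det2 U₀ = 1 →
      ∃ V : Set (Fin 2 → Fin 2 → ℂ), V ⊆ O ∧ IsOpen V ∧ U₀ ∈ V ∧
      ∃ W : Set ℂ, IsOpen W ∧ U₀ 0 0 / U₀ 1 0 ∈ W ∧
      ∃ f₁ f₂ : ℂ → ℂ, DifferentiableOn ℂ f₁ W ∧ DifferentiableOn ℂ f₂ W ∧
        ∀ U ∈ V, det2 U = 1 →
          f U = U 0 0 * f₁ (U 0 0 / U 1 0) + U 1 0 * f₂ (U 0 0 / U 1 0) := by
  intro U₀ hU₀ hdetU₀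
  set a₀ := U₀ 0 0 with ha₀
  set b₀ := U₀ 0 1 with hb₀
  set c₀ := U₀ 1 0 with hc₀def
  set d₀ := U₀ 1 1 with hd₀
  have hc₀ : c₀ ≠ 0 := hO' hU₀
  have hdet' : a₀ * d₀ - b₀ * c₀ = 1 := hdetU₀
  set k := c₀ * d₀ with hk
  set z₀ := a₀ / c₀ with hz₀
  -- the parametrization hits U₀
  have hphiU₀ : phiP k z₀ c₀ 0 = U₀ := by
    funext i j
    fin_cases i <;> fin_cases j <;>
      simp only [phiP] <;>
      simp [Matrix.cons_val_zero, Matrix.cons_val_one, hz₀, hk]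
    · field_simp
      exact ha₀
    · field_simp
      linear_combination hdet'
    · exact hc₀def
    · field_simp
      exact hd₀
  -- continuity of the parametrization at (z₀, c₀, 0)
  have hcontPhi : ContinuousAt (fun p : ℂ × ℂ × ℂ => phiP k p.1 p.2.1 p.2.2) (z₀, c₀, 0) := by
    apply continuousAt_pi.2
    intro i
    apply continuousAt_pi.2
    intro j
    fin_cases i <;> fin_cases j
    · show ContinuousAt (fun p : ℂ × ℂ × ℂ => p.2.1 * p.1) (z₀, c₀, 0)
      exact continuousAt_snd.fst.mul continuousAt_fst
    · show ContinuousAt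
        (fun p : ℂ × ℂ × ℂ => (p.1 * k - 1) / p.2.1 + p.2.2 * (p.2.1 * p.1)) (z₀, c₀, 0)
      exact (((continuousAt_fst.mul continuousAt_const).sub continuousAt_const).div
        continuousAt_snd.fst hc₀).add
        (continuousAt_snd.snd.mul (continuousAt_snd.fst.mul continuousAt_fst))
    · show ContinuousAt (fun p : ℂ × ℂ × ℂ => p.2.1) (z₀, c₀, 0)
      exact continuousAt_snd.fst
    · show ContinuousAt (fun p : ℂ × ℂ × ℂ => k / p.2.1 + p.2.2 * p.2.1) (z₀, c₀, 0)
      exact (continuousAt_const.div continuousAt_snd.fst hc₀).add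
        (continuousAt_snd.snd.mul continuousAt_snd.fst)
  -- find a polydisc radius r
  have hmemO : (fun p : ℂ × ℂ × ℂ => phiP k p.1 p.2.1 p.2.2) ⁻¹' O ∈ nhds ((z₀, c₀, (0:ℂ))) := by
    apply hcontPhi.preimage_mem_nhds
    rw [hphiU₀]
    exact hO.mem_nhds hU₀
  obtain ⟨ε, hε, hball⟩ := Metric.mem_nhds_iff.1 hmemO
  set r := min ε ‖c₀‖ / 2 with hr
  have hrpos : 0 < r := by
    have : 0 < ‖c₀‖ := norm_pos_iff.2 hc₀
    positivity
  have hrε : r < ε := by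
    have h1 : r ≤ ε / 2 := by
      rw [hr]
      have := min_le_left ε ‖c₀‖
      linarith
    linarith
  have hrc : r < ‖c₀‖ := by
    have h0 : 0 < ‖c₀‖ := norm_pos_iff.2 hc₀
    have h1 : r ≤ ‖c₀‖ / 2 := by
      rw [hr]
      have := min_le_right ε ‖c₀‖
      linarith
    linarith
  -- membership in O for polydisc points
  have hPO : ∀ z ∈ ball z₀ r, ∀ s ∈ ball c₀ r, ∀ t ∈ ball (0:ℂ) r, phiP k z s t ∈ O := by
    intro z hz s hs t ht
    have hmem : ((z, s, t) : ℂ × ℂ × ℂ) ∈ ball ((z₀, c₀, (0:ℂ))) ε := by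
      rw [mem_ball, Prod.dist_eq, Prod.dist_eq]
      apply max_lt (lt_trans (mem_ball.1 hz) hrε)
      exact max_lt (lt_trans (mem_ball.1 hs) hrε) (lt_trans (mem_ball.1 ht) hrε)
    exact hball hmem
  have hsne : ∀ s ∈ ball c₀ r, s ≠ 0 := by
    intro s hs h0
    rw [h0, mem_ball, dist_zero_left] at hs
    exact lt_irrefl _ (hs.trans hrc)
  -- derivative of f exists at points of O
  have hfd : ∀ U ∈ O, HasFDerivAt f (fderiv ℂ f U) U := fun U hU =>
    (hf.differentiableAt (hO.mem_nhds hU)).hasFDerivAt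
  -- Step A : f is constant in t
  have stepA : ∀ z ∈ ball z₀ r, ∀ s ∈ ball c₀ r, ∀ t ∈ ball (0:ℂ) r,
      f (phiP k z s t) = f (phiP k z s 0) := by
    intro z hz s hs t ht
    have h0ball : (0:ℂ) ∈ ball (0:ℂ) r := mem_ball_self hrpos
    refine const_on_convex (u := fun t => f (phiP k z s t)) (convex_ball _ _) ?_ ht h0ball
    intro t' ht'
    have hmem : phiP k z s t' ∈ O := hPO z hz s hs t' ht'
    have hdet1 : det2 (phiP k z s t') = 1 := phiP_det k z s t' (hsne s hs)
    have hder1 : HasDerivAt (fun t => phiP k z s t) (![![(0:ℂ), s*z], ![0, s]]) t' := by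
      have h : HasDerivAt (fun t : ℂ => phiP k z s 0 + t • ![![(0:ℂ), s*z], ![0, s]])
          ((1:ℂ) • ![![(0:ℂ), s*z], ![0, s]]) t' :=
        ((hasDerivAt_id t').smul_const _).const_add _
      rw [one_smul] at h
      have hfun : (fun t : ℂ => phiP k z s 0 + t • ![![(0:ℂ), s*z], ![0, s]])
          = fun t => phiP k z s t := funext fun t => (phiP_t k z s t).symm
      rw [hfun] at h
      exact h
    have hcomp := (hfd _ hmem).comp_hasDerivAt_of_eq t' hder1 rfl
    have : fderiv ℂ f (phiP k z s t') (![![(0:ℂ), s*z], ![0, s]]) = 0 := by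
      rw [← dirE_phiP k z s t']
      exact hE _ hmem hdet1
    rw [this] at hcomp
    simp only [Function.comp_def] at hcomp
    exact hcomp
  -- Step B : f(φ(z,s,0))/s is constant in s
  have stepB : ∀ z ∈ ball z₀ r, ∀ s ∈ ball c₀ r,
      f (phiP k z s 0) * s⁻¹ = f (phiP k z c₀ 0) * c₀⁻¹ := by
    intro z hz s hs
    have hc₀ball : c₀ ∈ ball c₀ r := mem_ball_self hrpos
    refine const_on_convex (u := fun s => f (phiP k z s 0) * s⁻¹) (convex_ball _ _) ?_ hs hc₀ball
    intro s' hs'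
    have hs'0 : s' ≠ 0 := hsne s' hs'
    have hmem : phiP k z s' 0 ∈ O :=
      hPO z hz s' hs' 0 (mem_ball_self hrpos)
    have hdet1 : det2 (phiP k z s' 0) = 1 := phiP_det k z s' 0 hs'0
    -- derivative of s ↦ φ(z,s,0)
    have hder1 : HasDerivAt (fun s => phiP k z s 0)
        (![![z, (0:ℂ)], ![1, 0]] + (-(s'^2)⁻¹) • ![![(0:ℂ), z*k-1], ![0, k]]) s' := by
      have h1 : HasDerivAt (fun s : ℂ => s • ![![z, (0:ℂ)], ![1, 0]])
          ((1:ℂ) • ![![z, (0:ℂ)], ![1, 0]]) s' := (hasDerivAt_id s').smul_const _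
      have h2 : HasDerivAt (fun s : ℂ => s⁻¹ • ![![(0:ℂ), z*k-1], ![0, k]])
          ((-(s'^2)⁻¹) • ![![(0:ℂ), z*k-1], ![0, k]]) s' := (hasDerivAt_inv hs'0).smul_const _
      have h := h1.add h2
      rw [one_smul] at h
      have hfun : (fun s : ℂ => s • ![![z, (0:ℂ)], ![1, 0]] + s⁻¹ • ![![(0:ℂ), z*k-1], ![0, k]])
          = fun s => phiP k z s 0 := funext fun s => (phiP_s k z s).symm
      rw [← hfun]
      exact h
    have hcomp := (hfd _ hmem).comp_hasDerivAt_of_eq s' hder1 rfl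
    have hval : fderiv ℂ f (phiP k z s' 0)
        (![![z, (0:ℂ)], ![1, 0]] + (-(s'^2)⁻¹) • ![![(0:ℂ), z*k-1], ![0, k]])
        = s'⁻¹ * f (phiP k z s' 0) := by
      rw [dirH_phiP k z s' hs'0, map_smul, hH _ hmem hdet1, smul_eq_mul]
    rw [hval] at hcomp
    have hinv : HasDerivAt (fun s : ℂ => s⁻¹) (-(s'^2)⁻¹) s' := hasDerivAt_inv hs'0
    have hprod := hcomp.mul hinv
    have hzero : s'⁻¹ * f (phiP k z s' 0) * s'⁻¹ + f (phiP k z s' 0) * -(s' ^ 2)⁻¹ = 0 := by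
      field_simp
      ring
    simp only [Function.comp_def] at hprod
    rw [hzero] at hprod
    exact hprod
  -- definition of the candidate functions and sets
  set W := ball z₀ r with hW
  set f₂ : ℂ → ℂ := fun z => f (phiP k z c₀ 0) / c₀ with hf₂
  -- combine Steps A and B
  have hkey : ∀ z ∈ ball z₀ r, ∀ s ∈ ball c₀ r, ∀ t ∈ ball (0:ℂ) r,
      f (phiP k z s t) = s * f₂ z := by
    intro z hz s hs t ht
    rw [stepA z hz s hs t ht]
    have hthis := stepB z hz s hs
    have hs0 : s ≠ 0 := hsne s hs
    rw [hf₂]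
    show f (phiP k z s 0) = s * (f (phiP k z c₀ 0) / c₀)
    field_simp [hs0] at hthis ⊢
    linear_combination hthis
  -- differentiability of f₂ on W
  have hf₂diff : DifferentiableOn ℂ f₂ W := by
    have hmap : ∀ z ∈ W, phiP k z c₀ 0 ∈ O := fun z hz =>
      hPO z hz c₀ (mem_ball_self hrpos) 0 (mem_ball_self hrpos)
    have hinner : DifferentiableOn ℂ (fun z => phiP k z c₀ 0) W := by
      apply Differentiable.differentiableOn
      apply differentiable_pi.2
      intro i
      apply differentiable_pi.2
      intro j
      fin_cases i <;> fin_cases j <;> simp only [phiP] <;> simp <;> fun_prop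
    exact ((hf.comp hinner fun z hz => hmap z hz).div_const c₀)
  -- the neighborhood V
  set Ψ : (Fin 2 → Fin 2 → ℂ) → ℂ × ℂ × ℂ :=
    fun U => (U 0 0 / U 1 0, U 1 0, (U 1 1 - k / U 1 0) / U 1 0) with hΨ
  set S : Set (Fin 2 → Fin 2 → ℂ) := {U | U 1 0 ≠ 0} with hS
  have hSopen : IsOpen S := by
    have hc : Continuous fun U : Fin 2 → Fin 2 → ℂ => U 1 0 :=
      (continuous_apply (0 : Fin 2)).comp (continuous_apply (1 : Fin 2))
    exact isOpen_compl_singleton.preimage hc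
  have hΨcont : ContinuousOn Ψ S := by
    have hc10 : ContinuousOn (fun U : Fin 2 → Fin 2 → ℂ => U 1 0) S :=
      ((continuous_apply (0 : Fin 2)).comp (continuous_apply (1 : Fin 2))).continuousOn
    have hc00 : ContinuousOn (fun U : Fin 2 → Fin 2 → ℂ => U 0 0) S :=
      ((continuous_apply (0 : Fin 2)).comp (continuous_apply (0 : Fin 2))).continuousOn
    have hc11 : ContinuousOn (fun U : Fin 2 → Fin 2 → ℂ => U 1 1) S :=
      ((continuous_apply (1 : Fin 2)).comp (continuous_apply (1 : Fin 2))).continuousOn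
    have hne : ∀ U ∈ S, U 1 0 ≠ 0 := fun U hU => hU
    exact (hc00.div hc10 hne).prodMk
      ((hc10).prodMk (((hc11.sub ((continuousOn_const).div hc10 hne)).div hc10 hne)))
  set V := O ∩ (S ∩ Ψ ⁻¹' (ball z₀ r ×ˢ ball c₀ r ×ˢ ball (0:ℂ) r)) with hV
  have hVopen : IsOpen V :=
    hO.inter (hΨcont.isOpen_inter_preimage hSopen
      ((isOpen_ball).prod ((isOpen_ball).prod isOpen_ball)))
  have hU₀V : U₀ ∈ V := by
    refine ⟨hU₀, hc₀, ?_⟩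
    have ht0 : (d₀ - k / c₀) / c₀ = 0 := by
      rw [hk]
      field_simp
      ring
    constructor
    · exact mem_ball_self hrpos
    constructor
    · exact mem_ball_self hrpos
    · show (U₀ 1 1 - k / U₀ 1 0) / U₀ 1 0 ∈ ball (0:ℂ) r
      rw [← hd₀, ← hc₀def, ht0]
      exact mem_ball_self hrpos
  refine ⟨V, fun U hU => hU.1, hVopen, hU₀V, W, isOpen_ball, mem_ball_self hrpos,
    0, f₂, differentiableOn_const 0, hf₂diff, ?_⟩
  intro U hU hdetU
  obtain ⟨hUO, hUS, hUball⟩ := hU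
  have hc : U 1 0 ≠ 0 := hUS
  have hdetU' : U 0 0 * U 1 1 - U 0 1 * U 1 0 = 1 := hdetU
  obtain ⟨hz, hs, ht⟩ := hUball
  -- U equals φ at its own coordinates
  have hUeq : phiP k (U 0 0 / U 1 0) (U 1 0) ((U 1 1 - k / U 1 0) / U 1 0) = U := by
    funext i j
    fin_cases i <;> fin_cases j
    · show U 1 0 * (U 0 0 / U 1 0) = U 0 0
      field_simp
    · show (U 0 0 / U 1 0 * k - 1) / U 1 0
          + (U 1 1 - k / U 1 0) / U 1 0 * (U 1 0 * (U 0 0 / U 1 0)) = U 0 1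
      field_simp
      linear_combination (U 1 0) * hdetU'
    · show (U 1 0 : ℂ) = U 1 0
      rfl
    · show k / U 1 0 + (U 1 1 - k / U 1 0) / U 1 0 * U 1 0 = U 1 1
      field_simp
      ring
  have := hkey (U 0 0 / U 1 0) hz (U 1 0) hs ((U 1 1 - k / U 1 0) / U 1 0) ht
  rw [hUeq] at this
  rw [this]
  simp [mul_comm]
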